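/- Let θ̄ = min_{x ∈ S} f(x)/g(x) and F(θ) = min_{x ∈ S} (f(x) − θ g(x)). Then F(θ̄) = 0; moreover, for any θ̂ ∈ ℝ, if F(θ̂) = 0 then θ̂ = θ̄. -/
import Mathlib


theorem dinkelbach_root_characterization
    {n : ℕ} (hn : 1 ≤ n)
    (S : Set (EuclideanSpace ℝ (Fin n))) (hS : S.Nonempty) (hSc : IsCompact S)
    (f g : EuclideanSpace ℝ (Fin n) → ℝ)
    (hf : Continuous f) (hg : Continuous g) (hgpos : ∀ x ∈ S, 0 < g x)
    (θbar : ℝ) (hθbar : IsLeast ((fun x => f x / g x) '' S) θbar)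
    (F : ℝ → ℝ) (hF : ∀ θ : ℝ, IsLeast ((fun x => f x - θ * g x) '' S) (F θ)) :
    F θbar = 0 ∧ ∀ θhat : ℝ, F θhat = 0 → θhat = θbar := by
  obtain ⟨⟨xbar, hxS, hxeq⟩, hlb⟩ := hθbar
  have hFbar : F θbar = 0 := by
    have hle : F θbar ≤ 0 := by
      have h0 : f xbar - θbar * g xbar = 0 := by
        have hg0 := hgpos xbar hxS
        have : f xbar = θbar * g xbar := by
          field_simp at hxeq
          linarith [hxeq]
        linarith
      have := (hF θbar).2 ⟨xbar, hxS, h0⟩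
      linarith
    have hge : 0 ≤ F θbar := by
      obtain ⟨x, hx, hxe⟩ := (hF θbar).1
      have hg0 := hgpos x hx
      have : θbar ≤ f x / g x := hlb ⟨x, hx, rfl⟩
      have : θbar * g x ≤ f x := by
        rw [le_div_iff₀ hg0] at this; linarith
      dsimp only at hxe
      linarith
    linarith
  refine ⟨hFbar, fun θhat hθhat => ?_⟩
  -- θhat ≤ θbar : from 0 = F θhat ≤ f xbar - θhat g xbar and f xbar = θbar g xbar
  have hg0 := hgpos xbar hxS
  have hfxbar : f xbar = θbar * g xbar := by
    field_simp at hxeq; linarith [hxeq]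
  have h1 : θhat ≤ θbar := by
    have := (hF θhat).2 ⟨xbar, hxS, rfl⟩
    dsimp only at this
    rw [hθhat] at this
    nlinarith
  -- θbar ≤ θhat : F θhat attained at some x, f x = θhat g x, so θhat = f x / g x ≥ θbar
  have h2 : θbar ≤ θhat := by
    obtain ⟨x, hx, hxe⟩ := (hF θhat).1
    dsimp only at hxe
    rw [hθhat] at hxe
    have hgx := hgpos x hx
    have : θbar ≤ f x / g x := hlb ⟨x, hx, rfl⟩
    rw [le_div_iff₀ hgx] at this
    nlinarith
  linarith
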